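/- arXiv:1001.2278 — 5 statements merged into one kernel-verified Lean document; each statement's English description precedes it below -/
import Mathlib

section
/- Let R be an algebraic curvature tensor on ℝⁿ (n ≥ 4), i.e. a multilinear form R: ℝⁿ×ℝⁿ×ℝⁿ×ℝⁿ → ℝ satisfying R(X,Y,Z,W) = -R(Y,X,Z,W) = R(Z,W,X,Y) and the first Bianchi identity. Suppose that for some point the sectional-type pinching holds: there exist constants K_min, K_max with 0 < K_max < 4·K_min such that K_min ≤ R(X,Y,X,Y) ≤ K_max for all orthonormal pairs X,Y, and suppose Berger's inequality |R(e₁,e₂,e₃,e₄)| ≤ (2/3)(K_max − K_min) holds for all orthonormal four-frames. Then for every orthonormal four-frame {e₁,e₂,e₃,e₄} and all λ, μ ∈ [0,1]: R(e₁,e₃,e₁,e₃) + λ²R(e₁,e₄,e₁,e₄) + μ²R(e₂,e₃,e₂,e₃) + λ²μ²R(e₂,e₄,e₂,e₄) − 2λμ·R(e₁,e₂,e₃,e₄) > 0. -/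
noncomputable section
open scoped BigOperators

/-- Euclidean dot product on `ℝⁿ`. -/
def dotp {n : ℕ} (X Y : Fin n → ℝ) : ℝ := ∑ i, X i * Y i

/-- An orthonormal four-frame. -/
def ON4 {n : ℕ} (e₁ e₂ e₃ e₄ : Fin n → ℝ) : Prop :=
  dotp e₁ e₁ = 1 ∧ dotp e₂ e₂ = 1 ∧ dotp e₃ e₃ = 1 ∧ dotp e₄ e₄ = 1 ∧
  dotp e₁ e₂ = 0 ∧ dotp e₁ e₃ = 0 ∧ dotp e₁ e₄ = 0 ∧
  dotp e₂ e₃ = 0 ∧ dotp e₂ e₄ = 0 ∧ dotp e₃ e₄ = 0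

theorem pinching_implies_pic_lambda_mu {n : ℕ} (hn : 4 ≤ n)
    (R : MultilinearMap ℝ (fun _ : Fin 4 => (Fin n → ℝ)) ℝ)
    (hanti : ∀ X Y Z W, R ![X, Y, Z, W] = - R ![Y, X, Z, W])
    (hpair : ∀ X Y Z W, R ![X, Y, Z, W] = R ![Z, W, X, Y])
    (hbianchi : ∀ X Y Z W,
      R ![X, Y, Z, W] + R ![Y, Z, X, W] + R ![Z, X, Y, W] = 0)
    (Kmin Kmax : ℝ) (hK0 : 0 < Kmax) (hK4 : Kmax < 4 * Kmin)
    (hsec : ∀ X Y : Fin n → ℝ, dotp X X = 1 → dotp Y Y = 1 → dotp X Y = 0 →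
      Kmin ≤ R ![X, Y, X, Y] ∧ R ![X, Y, X, Y] ≤ Kmax)
    (hberger : ∀ e₁ e₂ e₃ e₄ : Fin n → ℝ, ON4 e₁ e₂ e₃ e₄ →
      |R ![e₁, e₂, e₃, e₄]| ≤ (2 / 3) * (Kmax - Kmin)) :
    ∀ e₁ e₂ e₃ e₄ : Fin n → ℝ, ON4 e₁ e₂ e₃ e₄ →
      ∀ lam mu : ℝ, lam ∈ Set.Icc (0 : ℝ) 1 → mu ∈ Set.Icc (0 : ℝ) 1 →
      0 < R ![e₁, e₃, e₁, e₃] + lam ^ 2 * R ![e₁, e₄, e₁, e₄]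
          + mu ^ 2 * R ![e₂, e₃, e₂, e₃]
          + lam ^ 2 * mu ^ 2 * R ![e₂, e₄, e₂, e₄]
          - 2 * lam * mu * R ![e₁, e₂, e₃, e₄] := by
  intro e₁ e₂ e₃ e₄ hON lam mu hlam hmu
  obtain ⟨h1, h2, h3, h4, h12, h13, h14, h23, h24, h34⟩ := hON
  have s13 := (hsec e₁ e₃ h1 h3 h13).1
  have s14 := (hsec e₁ e₄ h1 h4 h14).1
  have s23 := (hsec e₂ e₃ h2 h3 h23).1
  have s24 := (hsec e₂ e₄ h2 h4 h24).1
  have hB := hberger e₁ e₂ e₃ e₄ ⟨h1, h2, h3, h4, h12, h13, h14, h23, h24, h34⟩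
  rw [abs_le] at hB
  obtain ⟨hB1, hB2⟩ := hB
  obtain ⟨hl0, hl1⟩ := hlam
  obtain ⟨hm0, hm1⟩ := hmu
  have hKmin : 0 < Kmin := by linarith
  nlinarith [sq_nonneg (1 - lam * mu), sq_nonneg (lam - mu), mul_nonneg hl0 hm0,
    mul_nonneg (mul_nonneg hl0 hm0) hKmin.le, sq_nonneg lam, sq_nonneg mu,
    mul_nonneg (mul_nonneg hl0 hl0) hKmin.le, mul_nonneg (mul_nonneg hm0 hm0) hKmin.le,
    mul_nonneg (mul_nonneg (mul_nonneg hl0 hl0) (mul_nonneg hm0 hm0)) hKmin.le,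
    mul_le_mul_of_nonneg_left s14 (sq_nonneg lam), mul_le_mul_of_nonneg_left s23 (sq_nonneg mu),
    mul_le_mul_of_nonneg_left s24 (mul_nonneg (sq_nonneg lam) (sq_nonneg mu)),
    mul_le_mul_of_nonneg_left hB2 (mul_nonneg hl0 hm0),
    mul_le_mul_of_nonneg_left hB1 (mul_nonneg hl0 hm0),
    mul_nonneg (mul_nonneg hl0 hm0) (by linarith : (0:ℝ) ≤ 16/3 * Kmin - 4/3 * Kmax)]
end
end

section
/- Let A, B, C, D, E, F be real m×m matrices with B, A symmetric (as blocks of a symmetric operator), and suppose the block matrix [[B, F, -Cᵀ, -Dᵀ], [-F, B, Dᵀ, -Cᵀ], [-C, D, A, E], [-D, -C, -E, A]] is symmetric and positive semi-definite. Then tr(AB) + tr(EF) ≥ tr(C²) + tr(D²). -/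
open Matrix

lemma trace_fromBlocks' {n p R : Type*} [Fintype n] [Fintype p] [AddCommMonoid R]
    (A : Matrix n n R) (B : Matrix n p R) (C : Matrix p n R) (D : Matrix p p R) :
    (fromBlocks A B C D).trace = A.trace + D.trace := by
  simp [Matrix.trace, Fintype.sum_sum_type, fromBlocks]

lemma psd_trace_nonneg' {n : Type*} [Fintype n] [DecidableEq n] {P : Matrix n n ℝ}
    (h : P.PosSemidef) : 0 ≤ P.trace := by
  apply Finset.sum_nonneg
  intro i _
  exact h.diag_nonneg

lemma trace_mul_psd_nonneg' {n : Type*} [Fintype n] [DecidableEq n] {P N : Matrix n n ℝ}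
    (hP : P.PosSemidef) (hN : N.PosSemidef) : 0 ≤ (P * N).trace := by
  obtain ⟨L, rfl⟩ : ∃ L : Matrix n n ℝ, P = Lᴴ * L := by
    open scoped MatrixOrder Matrix.Norms.L2Operator in
    exact CStarAlgebra.nonneg_iff_eq_star_mul_self.mp hP.nonneg
  rw [Matrix.mul_assoc, Matrix.trace_mul_comm]
  exact psd_trace_nonneg' (hN.mul_mul_conjTranspose_same L)

theorem block_psd_trace_inequality {m : ℕ} (A B C D E F : Matrix (Fin m) (Fin m) ℝ)
    (M : Matrix ((Fin m ⊕ Fin m) ⊕ (Fin m ⊕ Fin m))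
                ((Fin m ⊕ Fin m) ⊕ (Fin m ⊕ Fin m)) ℝ)
    (hM : M = Matrix.fromBlocks
      (Matrix.fromBlocks B F (-F) B)
      (Matrix.fromBlocks (-Cᵀ) (-Dᵀ) Dᵀ (-Cᵀ))
      (Matrix.fromBlocks (-C) D (-D) (-C))
      (Matrix.fromBlocks A E (-E) A))
    (hsymm : M.IsSymm) (hpsd : M.PosSemidef) :
    Matrix.trace (C * C) + Matrix.trace (D * D)
      ≤ Matrix.trace (A * B) + Matrix.trace (E * F) := by
  set K : Matrix (Fin m ⊕ Fin m) (Fin m ⊕ Fin m) ℝ := fromBlocks 0 1 1 0 with hK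
  set S : Matrix ((Fin m ⊕ Fin m) ⊕ (Fin m ⊕ Fin m)) ((Fin m ⊕ Fin m) ⊕ (Fin m ⊕ Fin m)) ℝ :=
    fromBlocks 0 K (-K) 0 with hS
  have hN : (S * M * Sᵀ).PosSemidef := by
    have := hpsd.mul_mul_conjTranspose_same S
    simpa using this
  have hpos : 0 ≤ (M * (S * M * Sᵀ)).trace := trace_mul_psd_nonneg' hpsd hN
  have key : (M * (S * M * Sᵀ)).trace
      = 4*((A*B).trace + (E*F).trace) - 4*((C*C).trace + (D*D).trace) := by
    simp only [hM, hS, hK, fromBlocks_transpose, transpose_neg, transpose_zero, transpose_one,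
      fromBlocks_multiply, Matrix.mul_zero, Matrix.zero_mul, Matrix.mul_one, Matrix.one_mul,
      Matrix.mul_neg, Matrix.neg_mul, neg_neg, add_zero, zero_add, neg_zero,
      Matrix.add_mul, Matrix.mul_add]
    simp only [trace_add, trace_neg, trace_fromBlocks']
    simp only [← transpose_mul, trace_transpose]
    rw [trace_mul_comm B A, trace_mul_comm F E]
    ring
  linarith [key ▸ hpos]
end

section
/- Let R be an algebraic curvature tensor on ℝⁿ and define Q(R)(X,Y,Z,W) = Σ_{p,q} R(X,Y,e_p,e_q)R(Z,W,e_p,e_q) + 2Σ_{p,q} R(X,e_p,Z,e_q)R(Y,e_p,W,e_q) − 2Σ_{p,q} R(X,e_p,W,e_q)R(Y,e_p,Z,e_q), where {e_p} is an orthonormal basis. Then for any orthonormal four-frame {e₁,e₂,e₃,e₄}: Q(R)₁₃₁₃ + Q(R)₁₄₁₄ + Q(R)₂₃₂₃ + Q(R)₂₄₂₄ − 2Q(R)₁₂₃₄ = Σ_{p,q}(R₁₃pq − R₂₄pq)² + Σ_{p,q}(R₁₄pq + R₂₃pq)² + 2Σ_{p,q}(R₁p₁q + R₂p₂q)(R₃p₃q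 + R₄p₄q) − 2Σ_{p,q}R₁₂pq·R₃₄pq − 2Σ_{p,q}(R₁p₃q + R₂p₄q)(R₃p₁q + R₄p₂q) − 2Σ_{p,q}(R₁p₄q − R₂p₃q)(R₄p₁q − R₃p₂q). -/
noncomputable section
open scoped BigOperators

private lemma expandsq_sub {n : ℕ} (f g : Fin n → Fin n → ℝ) :
    (∑ p, ∑ q, (f p q - g p q) ^ 2)
    = (∑ p, ∑ q, f p q * f p q) - 2 * (∑ p, ∑ q, f p q * g p q)
      + (∑ p, ∑ q, g p q * g p q) := by
  have h : ∀ p q : Fin n, (f p q - g p q) ^ 2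
      = f p q * f p q - f p q * g p q - f p q * g p q + g p q * g p q := fun p q => by ring
  simp only [h, Finset.sum_add_distrib, Finset.sum_sub_distrib]
  ring

private lemma expandsq_add {n : ℕ} (f g : Fin n → Fin n → ℝ) :
    (∑ p, ∑ q, (f p q + g p q) ^ 2)
    = (∑ p, ∑ q, f p q * f p q) + 2 * (∑ p, ∑ q, f p q * g p q)
      + (∑ p, ∑ q, g p q * g p q) := by
  have h : ∀ p q : Fin n, (f p q + g p q) ^ 2
      = f p q * f p q + f p q * g p q + f p q * g p q + g p q * g p q := fun p q => by ring
  simp only [h, Finset.sum_add_distrib]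
  ring

private lemma expand_mul_add {n : ℕ} (f g h k : Fin n → Fin n → ℝ) :
    (∑ p, ∑ q, (f p q + g p q) * (h p q + k p q))
    = (∑ p, ∑ q, f p q * h p q) + (∑ p, ∑ q, f p q * k p q)
      + (∑ p, ∑ q, g p q * h p q) + (∑ p, ∑ q, g p q * k p q) := by
  have e : ∀ p q : Fin n, (f p q + g p q) * (h p q + k p q)
      = f p q * h p q + f p q * k p q + g p q * h p q + g p q * k p q := fun p q => by ring
  simp only [e, Finset.sum_add_distrib]

private lemma expand_mul_sub {n : ℕ} (f g h k : Fin n → Fin n → ℝ) :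
    (∑ p, ∑ q, (f p q - g p q) * (h p q - k p q))
    = (∑ p, ∑ q, f p q * h p q) - (∑ p, ∑ q, f p q * k p q)
      - (∑ p, ∑ q, g p q * h p q) + (∑ p, ∑ q, g p q * k p q) := by
  have e : ∀ p q : Fin n, (f p q - g p q) * (h p q - k p q)
      = f p q * h p q - f p q * k p q - g p q * h p q + g p q * k p q := fun p q => by ring
  simp only [e, Finset.sum_add_distrib, Finset.sum_sub_distrib]

theorem Q_identity {n : ℕ} (hn : 4 ≤ n)
    (R : MultilinearMap ℝ (fun _ : Fin 4 => (Fin n → ℝ)) ℝ)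
    (hanti : ∀ X Y Z W, R ![X, Y, Z, W] = - R ![Y, X, Z, W])
    (hpair : ∀ X Y Z W, R ![X, Y, Z, W] = R ![Z, W, X, Y])
    (hbianchi : ∀ X Y Z W,
      R ![X, Y, Z, W] + R ![Y, Z, X, W] + R ![Z, X, Y, W] = 0)
    -- an orthonormal basis `b` of `ℝⁿ`, whose first four vectors form the frame
    (b : Fin n → (Fin n → ℝ))
    (hb : ∀ p q, dotp (b p) (b q) = if p = q then (1 : ℝ) else 0)
    -- curvature components with respect to the basis
    (Rt : Fin n → Fin n → Fin n → Fin n → ℝ)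
    (hRt : ∀ i j k l, Rt i j k l = R ![b i, b j, b k, b l])
    -- the quadratic curvature term Q(R)
    (Q : Fin n → Fin n → Fin n → Fin n → ℝ)
    (hQ : ∀ i j k l, Q i j k l =
      (∑ p, ∑ q, Rt i j p q * Rt k l p q)
      + 2 * (∑ p, ∑ q, Rt i p k q * Rt j p l q)
      - 2 * (∑ p, ∑ q, Rt i p l q * Rt j p k q))
    (i₁ i₂ i₃ i₄ : Fin n)
    (h₁ : i₁ = ⟨0, by omega⟩) (h₂ : i₂ = ⟨1, by omega⟩)
    (h₃ : i₃ = ⟨2, by omega⟩) (h₄ : i₄ = ⟨3, by omega⟩) :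
    Q i₁ i₃ i₁ i₃ + Q i₁ i₄ i₁ i₄ + Q i₂ i₃ i₂ i₃ + Q i₂ i₄ i₂ i₄
        - 2 * Q i₁ i₂ i₃ i₄
      = (∑ p, ∑ q, (Rt i₁ i₃ p q - Rt i₂ i₄ p q) ^ 2)
        + (∑ p, ∑ q, (Rt i₁ i₄ p q + Rt i₂ i₃ p q) ^ 2)
        + 2 * (∑ p, ∑ q, (Rt i₁ p i₁ q + Rt i₂ p i₂ q) *
            (Rt i₃ p i₃ q + Rt i₄ p i₄ q))
        - 2 * (∑ p, ∑ q, Rt i₁ i₂ p q * Rt i₃ i₄ p q)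
        - 2 * (∑ p, ∑ q, (Rt i₁ p i₃ q + Rt i₂ p i₄ q) *
            (Rt i₃ p i₁ q + Rt i₄ p i₂ q))
        - 2 * (∑ p, ∑ q, (Rt i₁ p i₄ q - Rt i₂ p i₃ q) *
            (Rt i₄ p i₁ q - Rt i₃ p i₂ q)) := by
  -- component-level symmetries
  have anti : ∀ a b c d : Fin n, Rt a b c d = - Rt b a c d := by
    intro a b c d; rw [hRt, hRt]; exact hanti _ _ _ _
  have pair : ∀ a b c d : Fin n, Rt a b c d = Rt c d a b := by
    intro a b c d; rw [hRt, hRt]; exact hpair _ _ _ _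
  have bianchi : ∀ a b c d : Fin n, Rt a b c d + Rt b c a d + Rt c a b d = 0 := by
    intro a b c d; rw [hRt, hRt, hRt]; exact hbianchi _ _ _ _
  -- first Bianchi identity in the useful form
  have hBp : ∀ a b p q : Fin n, Rt a b p q = Rt a p b q - Rt b p a q := by
    intro a b p q
    have h1 := bianchi a b p q
    have h2 := anti p a b q
    linarith
  -- the key quadratic Bianchi-type identity at the level of double sums
  have hB : ∀ a b c d : Fin n,
      (∑ p, ∑ q, Rt a b p q * Rt c d p q)
      = 2 * (∑ p, ∑ q, Rt a p b q * Rt c p d q)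
        - 2 * (∑ p, ∑ q, Rt a p b q * Rt d p c q) := by
    intro a b c d
    have e : ∀ p q : Fin n, Rt a b p q * Rt c d p q
        = Rt a p b q * Rt c p d q - Rt a p b q * Rt d p c q
          - Rt b p a q * Rt c p d q + Rt b p a q * Rt d p c q := by
      intro p q
      rw [hBp a b p q, hBp c d p q]; ring
    have s3 : (∑ p, ∑ q, Rt b p a q * Rt c p d q)
        = ∑ p, ∑ q, Rt a p b q * Rt d p c q := by
      rw [Finset.sum_comm]
      refine Finset.sum_congr rfl fun x _ => Finset.sum_congr rfl fun y _ => ?_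
      rw [pair b y a x, pair c y d x]
    have s4 : (∑ p, ∑ q, Rt b p a q * Rt d p c q)
        = ∑ p, ∑ q, Rt a p b q * Rt c p d q := by
      rw [Finset.sum_comm]
      refine Finset.sum_congr rfl fun x _ => Finset.sum_congr rfl fun y _ => ?_
      rw [pair b y a x, pair d y c x]
    calc (∑ p, ∑ q, Rt a b p q * Rt c d p q)
        = ∑ p, ∑ q, (Rt a p b q * Rt c p d q - Rt a p b q * Rt d p c q
            - Rt b p a q * Rt c p d q + Rt b p a q * Rt d p c q) := by
          exact Finset.sum_congr rfl fun p _ => Finset.sum_congr rfl fun q _ => e p q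
      _ = (∑ p, ∑ q, Rt a p b q * Rt c p d q) - (∑ p, ∑ q, Rt a p b q * Rt d p c q)
            - (∑ p, ∑ q, Rt b p a q * Rt c p d q) + (∑ p, ∑ q, Rt b p a q * Rt d p c q) := by
          simp only [Finset.sum_add_distrib, Finset.sum_sub_distrib]
      _ = _ := by rw [s3, s4]; ring
  -- two relabeling identities (pair symmetry plus swapping the summation indices)
  have hsw1 : (∑ p, ∑ q, Rt i₂ p i₄ q * Rt i₃ p i₁ q)
      = ∑ p, ∑ q, Rt i₁ p i₃ q * Rt i₄ p i₂ q := by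
    rw [Finset.sum_comm]
    refine Finset.sum_congr rfl fun x _ => Finset.sum_congr rfl fun y _ => ?_
    rw [pair i₂ y i₄ x, pair i₃ y i₁ x]; ring
  have hsw2 : (∑ p, ∑ q, Rt i₂ p i₃ q * Rt i₄ p i₁ q)
      = ∑ p, ∑ q, Rt i₁ p i₄ q * Rt i₃ p i₂ q := by
    rw [Finset.sum_comm]
    refine Finset.sum_congr rfl fun x _ => Finset.sum_congr rfl fun y _ => ?_
    rw [pair i₂ y i₃ x, pair i₄ y i₁ x]; ring
  have hB1 := hB i₁ i₃ i₂ i₄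
  have hB2 := hB i₁ i₄ i₂ i₃
  simp only [hQ, expandsq_sub, expandsq_add, expand_mul_add, expand_mul_sub]
  linarith [hB1, hB2, hsw1, hsw2]
end
end

section
/- Let R be an algebraic curvature tensor on ℝⁿ with nonnegative isotropic curvature, attaining the value 0 at an orthonormal four-frame {e₁,e₂,e₃,e₄}. Then the first-variation identity R₁₂₁₃ + R₁₂₄₂ + R₃₄₁₃ + R₃₄₄₂ = 0 holds (obtained by rotating in the (e₂,e₃)-plane). -/
noncomputable section
open scoped BigOperators

def isoCurv {n : ℕ} (R : MultilinearMap ℝ (fun _ : Fin 4 => (Fin n → ℝ)) ℝ)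
    (e₁ e₂ e₃ e₄ : Fin n → ℝ) : ℝ :=
  R ![e₁, e₃, e₁, e₃] + R ![e₁, e₄, e₁, e₄] + R ![e₂, e₃, e₂, e₃]
    + R ![e₂, e₄, e₂, e₄] - 2 * R ![e₁, e₂, e₃, e₄]

lemma dotp_add_left {n : ℕ} (u v w : Fin n → ℝ) :
    dotp (u + v) w = dotp u w + dotp v w := by
  simp [dotp, add_mul, Finset.sum_add_distrib]

lemma dotp_add_right {n : ℕ} (u v w : Fin n → ℝ) :
    dotp u (v + w) = dotp u v + dotp u w := by
  simp [dotp, mul_add, Finset.sum_add_distrib]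

lemma dotp_smul_left {n : ℕ} (x : ℝ) (u w : Fin n → ℝ) :
    dotp (x • u) w = x * dotp u w := by
  simp [dotp, Finset.mul_sum, mul_assoc]

lemma dotp_smul_right {n : ℕ} (x : ℝ) (u w : Fin n → ℝ) :
    dotp u (x • w) = x * dotp u w := by
  simp [dotp, Finset.mul_sum]; apply Finset.sum_congr rfl; intro i _; ring

lemma dotp_comm {n : ℕ} (u w : Fin n → ℝ) : dotp u w = dotp w u := by
  simp [dotp, mul_comm]

lemma dotp_neg_left {n : ℕ} (u w : Fin n → ℝ) : dotp (-u) w = - dotp u w := by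
  simp [dotp, Finset.sum_neg_distrib]

lemma dotp_neg_right {n : ℕ} (u w : Fin n → ℝ) : dotp u (-w) = - dotp u w := by
  simp [dotp, Finset.sum_neg_distrib]

lemma lin0 {n : ℕ} (R : MultilinearMap ℝ (fun _ : Fin 4 => (Fin n → ℝ)) ℝ)
    (u v b c d : Fin n → ℝ) (x y : ℝ) :
    R ![x•u + y•v, b, c, d] = x * R ![u,b,c,d] + y * R ![v,b,c,d] := by
  have h : ∀ w : Fin n → ℝ, ![w, b, c, d] = Function.update ![u, b, c, d] 0 w := by
    intro w; funext i; fin_cases i <;> simp [Function.update]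
  rw [h, R.map_update_add, R.map_update_smul, R.map_update_smul, ← h, ← h]
  simp [smul_eq_mul]

lemma lin1 {n : ℕ} (R : MultilinearMap ℝ (fun _ : Fin 4 => (Fin n → ℝ)) ℝ)
    (a u v c d : Fin n → ℝ) (x y : ℝ) :
    R ![a, x•u + y•v, c, d] = x * R ![a,u,c,d] + y * R ![a,v,c,d] := by
  have h : ∀ w : Fin n → ℝ, ![a, w, c, d] = Function.update ![a, u, c, d] 1 w := by
    intro w; funext i; fin_cases i <;> simp [Function.update]
  rw [h, R.map_update_add, R.map_update_smul, R.map_update_smul, ← h, ← h]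
  simp [smul_eq_mul]

lemma lin2 {n : ℕ} (R : MultilinearMap ℝ (fun _ : Fin 4 => (Fin n → ℝ)) ℝ)
    (a b u v d : Fin n → ℝ) (x y : ℝ) :
    R ![a, b, x•u + y•v, d] = x * R ![a,b,u,d] + y * R ![a,b,v,d] := by
  have h : ∀ w : Fin n → ℝ, ![a, b, w, d] = Function.update ![a, b, u, d] 2 w := by
    intro w; funext i; fin_cases i <;> simp [Function.update]
  rw [h, R.map_update_add, R.map_update_smul, R.map_update_smul, ← h, ← h]
  simp [smul_eq_mul]

lemma lin3 {n : ℕ} (R : MultilinearMap ℝ (fun _ : Fin 4 => (Fin n → ℝ)) ℝ)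
    (a b c u v : Fin n → ℝ) (x y : ℝ) :
    R ![a, b, c, x•u + y•v] = x * R ![a,b,c,u] + y * R ![a,b,c,v] := by
  have h : ∀ w : Fin n → ℝ, ![a, b, c, w] = Function.update ![a, b, c, u] 3 w := by
    intro w; funext i; fin_cases i <;> simp [Function.update]
  rw [h, R.map_update_add, R.map_update_smul, R.map_update_smul, ← h, ← h]
  simp [smul_eq_mul]

lemma aux_c_zero (b c : ℝ) (h : ∀ t : ℝ, 0 ≤ b * t ^ 2 + c * t) : c = 0 := by
  have hb : (0:ℝ) < 1 + b ^ 2 := by positivity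
  have h1 := h (-c / (1 + b ^ 2))
  have h2 : 0 ≤ b * c ^ 2 - c ^ 2 * (1 + b ^ 2) := by
    have h3 := mul_le_mul_of_nonneg_left h1 (le_of_lt (by positivity : (0:ℝ) < (1 + b ^ 2) ^ 2))
    have h4 : (1 + b ^ 2) ^ 2 * (b * (-c / (1 + b ^ 2)) ^ 2 + c * (-c / (1 + b ^ 2)))
        = b * c ^ 2 - c ^ 2 * (1 + b ^ 2) := by
      field_simp
      ring
    rw [h4] at h3
    linarith
  have h5 : c ^ 2 ≤ 0 := by nlinarith [sq_nonneg (2 * b - 1), sq_nonneg c]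
  have h6 : c ^ 2 = 0 := le_antisymm h5 (sq_nonneg c)
  exact pow_eq_zero_iff (by norm_num) |>.mp h6

theorem first_variation_rotation_23 {n : ℕ} (hn : 4 ≤ n)
    (R : MultilinearMap ℝ (fun _ : Fin 4 => (Fin n → ℝ)) ℝ)
    (hanti : ∀ X Y Z W, R ![X, Y, Z, W] = - R ![Y, X, Z, W])
    (hpair : ∀ X Y Z W, R ![X, Y, Z, W] = R ![Z, W, X, Y])
    (hbianchi : ∀ X Y Z W,
      R ![X, Y, Z, W] + R ![Y, Z, X, W] + R ![Z, X, Y, W] = 0)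
    (hnic : ∀ e₁ e₂ e₃ e₄ : Fin n → ℝ, ON4 e₁ e₂ e₃ e₄ →
      0 ≤ isoCurv R e₁ e₂ e₃ e₄)
    (e₁ e₂ e₃ e₄ : Fin n → ℝ) (he : ON4 e₁ e₂ e₃ e₄)
    (hzero : isoCurv R e₁ e₂ e₃ e₄ = 0) :
    R ![e₁, e₂, e₁, e₃] + R ![e₁, e₂, e₄, e₂]
      + R ![e₃, e₄, e₁, e₃] + R ![e₃, e₄, e₄, e₂] = 0 := by
  obtain ⟨h11, h22, h33, h44, h12, h13, h14, h23, h24, h34⟩ := he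
  have h21 : dotp e₂ e₁ = 0 := by rw [dotp_comm]; exact h12
  have h31 : dotp e₃ e₁ = 0 := by rw [dotp_comm]; exact h13
  have h32 : dotp e₃ e₂ = 0 := by rw [dotp_comm]; exact h23
  have h41 : dotp e₄ e₁ = 0 := by rw [dotp_comm]; exact h14
  have h42 : dotp e₄ e₂ = 0 := by rw [dotp_comm]; exact h24
  have h43 : dotp e₄ e₃ = 0 := by rw [dotp_comm]; exact h34
  -- derived symmetries
  have hz1 : ∀ X Z W, R ![X, X, Z, W] = 0 := by
    intro X Z W; have := hanti X X Z W; linarith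
  have hz2 : ∀ X Y Z, R ![X, Y, Z, Z] = 0 := by
    intro X Y Z; rw [hpair]; exact hz1 Z X Y
  have hanti2 : ∀ X Y Z W, R ![X, Y, Z, W] = - R ![X, Y, W, Z] := by
    intro X Y Z W
    rw [hpair X Y Z W, hanti Z W X Y, hpair W Z X Y]
  -- orthonormality of the rotated frame
  have hON : ∀ x y : ℝ, x ^ 2 + y ^ 2 = 1 →
      ON4 e₁ (x • e₂ + (-y) • e₃) (y • e₂ + x • e₃) e₄ := by
    intro x y hxy
    refine ⟨h11, ?_, ?_, h44, ?_, ?_, h14, ?_, ?_, ?_⟩ <;>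
      simp [dotp_add_left, dotp_add_right, dotp_smul_left, dotp_smul_right,
        dotp_neg_left, dotp_neg_right,
        h11, h22, h33, h44, h12, h13, h14, h23, h24, h34, h21, h31, h32, h41, h42, h43] <;>
      (try linear_combination hxy) <;> (try ring)
  -- expansion of the isotropic curvature of the rotated frame
  have hEq : ∀ x y : ℝ, x ^ 2 + y ^ 2 = 1 →
      isoCurv R e₁ (x • e₂ + (-y) • e₃) (y • e₂ + x • e₃) e₄ =
        (R ![e₁,e₃,e₁,e₃] + R ![e₂,e₄,e₂,e₄] - 2 * R ![e₁,e₂,e₃,e₄]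
          + R ![e₁,e₄,e₁,e₄] + R ![e₂,e₃,e₂,e₃]) * x ^ 2
        + (R ![e₁,e₂,e₁,e₂] + R ![e₃,e₄,e₃,e₄] + 2 * R ![e₁,e₃,e₂,e₄]
          + R ![e₁,e₄,e₁,e₄] + R ![e₂,e₃,e₂,e₃]) * y ^ 2
        + (R ![e₁,e₂,e₁,e₃] + R ![e₁,e₃,e₁,e₂] - R ![e₂,e₄,e₃,e₄] - R ![e₃,e₄,e₂,e₄]
          - 2 * R ![e₁,e₂,e₂,e₄] + 2 * R ![e₁,e₃,e₃,e₄]) * (x * y) := by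
    intro x y hxy
    have h2332 : R ![e₂,e₃,e₃,e₂] = - R ![e₂,e₃,e₂,e₃] := hanti2 e₂ e₃ e₃ e₂
    have h3223 : R ![e₃,e₂,e₂,e₃] = - R ![e₂,e₃,e₂,e₃] := hanti e₃ e₂ e₂ e₃
    have h3232 : R ![e₃,e₂,e₃,e₂] = R ![e₂,e₃,e₂,e₃] := by
      rw [hanti e₃ e₂ e₃ e₂, hanti2 e₂ e₃ e₃ e₂]; ring
    simp only [isoCurv, lin0, lin1, lin2, lin3, hz1, hz2, mul_zero, add_zero, zero_add,
      mul_neg, neg_mul, neg_neg]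
    rw [h2332, h3223, h3232]
    linear_combination (R ![e₂,e₃,e₂,e₃] * (x ^ 2 + y ^ 2) - R ![e₁,e₄,e₁,e₄]) * hxy
  -- the key nonnegativity along the rotation
  have hα : R ![e₁,e₃,e₁,e₃] + R ![e₂,e₄,e₂,e₄] - 2 * R ![e₁,e₂,e₃,e₄]
      + R ![e₁,e₄,e₁,e₄] + R ![e₂,e₃,e₂,e₃] = 0 := by
    simp only [isoCurv] at hzero; linarith
  set β := R ![e₁,e₂,e₁,e₂] + R ![e₃,e₄,e₃,e₄] + 2 * R ![e₁,e₃,e₂,e₄]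
      + R ![e₁,e₄,e₁,e₄] + R ![e₂,e₃,e₂,e₃] with hβ
  set M := R ![e₁,e₂,e₁,e₃] + R ![e₁,e₃,e₁,e₂] - R ![e₂,e₄,e₃,e₄] - R ![e₃,e₄,e₂,e₄]
      - 2 * R ![e₁,e₂,e₂,e₄] + 2 * R ![e₁,e₃,e₃,e₄] with hM
  have key : ∀ t : ℝ, 0 ≤ β * t ^ 2 + M * t := by
    intro t
    have ht : (0:ℝ) < 1 + t ^ 2 := by positivity
    set s := Real.sqrt (1 + t ^ 2) with hs
    have hs2 : s ^ 2 = 1 + t ^ 2 := Real.sq_sqrt ht.le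
    have hs0 : 0 < s := Real.sqrt_pos.mpr ht
    have hxy : (1 / s) ^ 2 + (t / s) ^ 2 = 1 := by
      field_simp [hs2]
      linarith [hs2]
    have h0 := hnic e₁ ((1 / s) • e₂ + (-(t / s)) • e₃) ((t / s) • e₂ + (1 / s) • e₃) e₄
      (hON (1 / s) (t / s) hxy)
    rw [hEq (1 / s) (t / s) hxy] at h0
    rw [hα, zero_mul, zero_add] at h0
    have hre : β * (t / s) ^ 2 + M * (1 / s * (t / s)) = (β * t ^ 2 + M * t) / (1 + t ^ 2) := by
      rw [← hs2]; field_simp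
    rw [hre] at h0
    simpa using mul_nonneg h0 ht.le |>.trans_eq (by field_simp)
  have hM0 : M = 0 := aux_c_zero β M key
  -- translate back to the goal
  have g1 : R ![e₁,e₂,e₄,e₂] = - R ![e₁,e₂,e₂,e₄] := hanti2 e₁ e₂ e₄ e₂
  have g2 : R ![e₃,e₄,e₁,e₃] = R ![e₁,e₃,e₃,e₄] := hpair e₃ e₄ e₁ e₃
  have g3 : R ![e₃,e₄,e₄,e₂] = - R ![e₂,e₄,e₃,e₄] := by
    rw [hanti2 e₃ e₄ e₄ e₂, hpair e₃ e₄ e₂ e₄]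
  have g4 : R ![e₁,e₃,e₁,e₂] = R ![e₁,e₂,e₁,e₃] := hpair e₁ e₃ e₁ e₂
  have g5 : R ![e₃,e₄,e₂,e₄] = R ![e₂,e₄,e₃,e₄] := hpair e₃ e₄ e₂ e₄
  rw [hM, g4, g5] at hM0
  linarith [hM0, g1, g2, g3]
end
end

section
/- Let R be an algebraic curvature tensor on ℝⁿ (n ≥ 4). The following are equivalent: (i) for all orthonormal four-frames {e₁,e₂,e₃,e₄} and all λ ∈ [0,1], R(e₁,e₃,e₁,e₃) + λ²R(e₁,e₄,e₁,e₄) + R(e₂,e₃,e₂,e₃) + λ²R(e₂,e₄,e₂,e₄) − 2λR(e₁,e₂,e₃,e₄) ≥ 0; (ii) R(ζ,η,ζ̄,η̄) ≥ 0 for all ζ, η ∈ ℂⁿ with g(ζ,ζ)g(η,η) − g(ζ,η)² = 0, where g is the complex bilinear extension of the inner product. -/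
noncomputable section
open scoped BigOperators ComplexOrder

/-- Complex bilinear extension of the standard inner product. -/
def gc {n : ℕ} (ζ η : Fin n → ℂ) : ℂ := ∑ i, ζ i * η i

/-- Componentwise complex conjugation. -/
def conjv {n : ℕ} (ζ : Fin n → ℂ) : Fin n → ℂ := fun i => (starRingEnd ℂ) (ζ i)

/-- Inclusion of real vectors into the complexification. -/
def ιC {n : ℕ} (X : Fin n → ℝ) : Fin n → ℂ := fun i => (X i : ℂ)

set_option linter.unusedSectionVars false
set_option linter.unusedVariables false
set_option maxHeartbeats 1000000

namespace PICAux

section slots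
variable {k : Type*} [CommSemiring k] {M N : Type*} [AddCommMonoid M] [Module k M]
  [AddCommMonoid N] [Module k N]

lemma upd0 (a a' b c d : M) : Function.update ![a,b,c,d] (0 : Fin 4) a' = ![a',b,c,d] := by
  funext i; fin_cases i <;> simp

lemma upd1 (a b b' c d : M) : Function.update ![a,b,c,d] (1 : Fin 4) b' = ![a,b',c,d] := by
  funext i; fin_cases i <;> simp

lemma upd2 (a b c c' d : M) : Function.update ![a,b,c,d] (2 : Fin 4) c' = ![a,b,c',d] := by
  funext i; fin_cases i <;> simp

lemma upd3 (a b c d d' : M) : Function.update ![a,b,c,d] (3 : Fin 4) d' = ![a,b,c,d'] := by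
  funext i; fin_cases i <;> simp

variable (f : MultilinearMap k (fun _ : Fin 4 => M) N)

lemma madd0 (a a' b c d : M) : f ![a + a',b,c,d] = f ![a,b,c,d] + f ![a',b,c,d] := by
  simpa [upd0] using f.map_update_add ![a,b,c,d] 0 a a'
lemma madd1 (a b b' c d : M) : f ![a,b + b',c,d] = f ![a,b,c,d] + f ![a,b',c,d] := by
  simpa [upd1] using f.map_update_add ![a,b,c,d] 1 b b'
lemma madd2 (a b c c' d : M) : f ![a,b,c + c',d] = f ![a,b,c,d] + f ![a,b,c',d] := by
  simpa [upd2] using f.map_update_add ![a,b,c,d] 2 c c'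
lemma madd3 (a b c d d' : M) : f ![a,b,c,d + d'] = f ![a,b,c,d] + f ![a,b,c,d'] := by
  simpa [upd3] using f.map_update_add ![a,b,c,d] 3 d d'

lemma msmul0 (s : k) (a b c d : M) : f ![s • a,b,c,d] = s • f ![a,b,c,d] := by
  simpa [upd0] using f.map_update_smul ![a,b,c,d] 0 s a
lemma msmul1 (s : k) (a b c d : M) : f ![a,s • b,c,d] = s • f ![a,b,c,d] := by
  simpa [upd1] using f.map_update_smul ![a,b,c,d] 1 s b
lemma msmul2 (s : k) (a b c d : M) : f ![a,b,s • c,d] = s • f ![a,b,c,d] := by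
  simpa [upd2] using f.map_update_smul ![a,b,c,d] 2 s c
lemma msmul3 (s : k) (a b c d : M) : f ![a,b,c,s • d] = s • f ![a,b,c,d] := by
  simpa [upd3] using f.map_update_smul ![a,b,c,d] 3 s d

end slots

section negslots
variable {k : Type*} [CommRing k] {M N : Type*} [AddCommGroup M] [Module k M]
  [AddCommGroup N] [Module k N] (f : MultilinearMap k (fun _ : Fin 4 => M) N)

lemma mneg1 (a b c d : M) : f ![a,-b,c,d] = - f ![a,b,c,d] := by
  have := msmul1 f (-1 : k) a b c d; simpa using this
lemma mneg2 (a b c d : M) : f ![a,b,-c,d] = - f ![a,b,c,d] := by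
  have := msmul2 f (-1 : k) a b c d; simpa using this
lemma mneg3 (a b c d : M) : f ![a,b,c,-d] = - f ![a,b,c,d] := by
  have := msmul3 f (-1 : k) a b c d; simpa using this

end negslots

section agree
variable {n : ℕ}

def reV (ζ : Fin n → ℂ) : Fin n → ℝ := fun i => (ζ i).re
def imV (ζ : Fin n → ℂ) : Fin n → ℝ := fun i => (ζ i).im

lemma vec_decomp (ζ : Fin n → ℂ) : ζ = ιC (reV ζ) + Complex.I • ιC (imV ζ) := by
  funext i
  simp only [Pi.add_apply, Pi.smul_apply, ιC, reV, imV, smul_eq_mul]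
  rw [mul_comm]
  exact (Complex.re_add_im (ζ i)).symm

lemma agree (S T : MultilinearMap ℂ (fun _ : Fin 4 => (Fin n → ℂ)) ℂ)
    (h : ∀ A B C D : Fin n → ℝ, S ![ιC A, ιC B, ιC C, ιC D] = T ![ιC A, ιC B, ιC C, ιC D])
    (a b c d : Fin n → ℂ) : S ![a,b,c,d] = T ![a,b,c,d] := by
  obtain ⟨A, A', ha⟩ : ∃ X Y, a = ιC X + Complex.I • ιC Y := ⟨_, _, vec_decomp a⟩
  obtain ⟨B, B', hb⟩ : ∃ X Y, b = ιC X + Complex.I • ιC Y := ⟨_, _, vec_decomp b⟩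
  obtain ⟨C, C', hc⟩ : ∃ X Y, c = ιC X + Complex.I • ιC Y := ⟨_, _, vec_decomp c⟩
  obtain ⟨D, D', hd⟩ : ∃ X Y, d = ιC X + Complex.I • ιC Y := ⟨_, _, vec_decomp d⟩
  subst ha hb hc hd
  simp only [madd0, madd1, madd2, madd3, msmul0, msmul1, msmul2, msmul3, h]

end agree

section syms
variable {n : ℕ} (R : MultilinearMap ℝ (fun _ : Fin 4 => (Fin n → ℝ)) ℝ)
  (Rc : MultilinearMap ℂ (fun _ : Fin 4 => (Fin n → ℂ)) ℂ)

lemma comp_swap01 (a b c d : Fin n → ℂ) :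
    (fun i => ![a,b,c,d] (Equiv.swap (0:Fin 4) 1 i)) = ![b,a,c,d] := by
  funext i; fin_cases i <;> simp [Equiv.swap_apply_def]

lemma comp_swap23 (a b c d : Fin n → ℂ) :
    (fun i => ![a,b,c,d] (Equiv.swap (2:Fin 4) 3 i)) = ![a,b,d,c] := by
  funext i; fin_cases i <;> simp [Equiv.swap_apply_def]

lemma cAnti01 (hanti : ∀ X Y Z W, R ![X, Y, Z, W] = - R ![Y, X, Z, W])
    (hext : ∀ X Y Z W : Fin n → ℝ, Rc ![ιC X, ιC Y, ιC Z, ιC W] = (R ![X, Y, Z, W] : ℂ))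
    (a b c d : Fin n → ℂ) : Rc ![a,b,c,d] = - Rc ![b,a,c,d] := by
  have := agree Rc (-(Rc.domDomCongr (Equiv.swap (0:Fin 4) 1)))
    (fun A B C D => by
      simp only [MultilinearMap.neg_apply, MultilinearMap.domDomCongr_apply, comp_swap01,
        hext]
      exact_mod_cast congrArg (fun r : ℝ => (r : ℂ)) (hanti A B C D)) a b c d
  simpa [MultilinearMap.neg_apply, MultilinearMap.domDomCongr_apply, comp_swap01] using this

lemma anti23R (hanti : ∀ X Y Z W, R ![X, Y, Z, W] = - R ![Y, X, Z, W])
    (hpair : ∀ X Y Z W, R ![X, Y, Z, W] = R ![Z, W, X, Y])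
    (X Y Z W : Fin n → ℝ) : R ![X,Y,Z,W] = - R ![X,Y,W,Z] := by
  rw [hpair, hanti, ← hpair]

lemma cAnti23 (hanti : ∀ X Y Z W, R ![X, Y, Z, W] = - R ![Y, X, Z, W])
    (hpair : ∀ X Y Z W, R ![X, Y, Z, W] = R ![Z, W, X, Y])
    (hext : ∀ X Y Z W : Fin n → ℝ, Rc ![ιC X, ιC Y, ιC Z, ιC W] = (R ![X, Y, Z, W] : ℂ))
    (a b c d : Fin n → ℂ) : Rc ![a,b,c,d] = - Rc ![a,b,d,c] := by
  have := agree Rc (-(Rc.domDomCongr (Equiv.swap (2:Fin 4) 3)))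
    (fun A B C D => by
      simp only [MultilinearMap.neg_apply, MultilinearMap.domDomCongr_apply, comp_swap23,
        hext]
      exact_mod_cast congrArg (fun r : ℝ => (r : ℂ)) (anti23R R hanti hpair A B C D)) a b c d
  simpa [MultilinearMap.neg_apply, MultilinearMap.domDomCongr_apply, comp_swap23] using this

end syms

section forms
variable {n : ℕ}

lemma conjv_form (X Y : Fin n → ℝ) :
    conjv (ιC X + Complex.I • ιC Y) = ιC X + Complex.I • ιC (-Y) := by
  funext i
  simp [conjv, ιC, Complex.ext_iff]

lemma conjv_add (a b : Fin n → ℂ) : conjv (a + b) = conjv a + conjv b := by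
  funext i; simp [conjv]

lemma conjv_smul (c : ℂ) (a : Fin n → ℂ) :
    conjv (c • a) = (starRingEnd ℂ c) • conjv a := by
  funext i; simp [conjv]

lemma gc_comm (a b : Fin n → ℂ) : gc a b = gc b a := by
  simp [gc, mul_comm]

lemma gc_add_right (a b c : Fin n → ℂ) : gc a (b + c) = gc a b + gc a c := by
  simp [gc, mul_add, Finset.sum_add_distrib]

lemma gc_smul_right (c : ℂ) (a b : Fin n → ℂ) : gc a (c • b) = c * gc a b := by
  simp [gc, Finset.mul_sum, mul_comm, mul_left_comm]

lemma gc_decomp (a b c d : Fin n → ℝ) :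
    gc (ιC a + Complex.I • ιC b) (ιC c + Complex.I • ιC d) =
      (((dotp a c - dotp b d : ℝ) : ℂ) + ((dotp a d + dotp b c : ℝ) : ℂ) * Complex.I) := by
  unfold gc dotp ιC
  simp only [Pi.add_apply, Pi.smul_apply, smul_eq_mul]
  rw [Complex.ext_iff]
  simp [Complex.re_sum, Complex.im_sum, Complex.mul_re, Complex.mul_im,
    Finset.sum_sub_distrib, Finset.sum_add_distrib]

lemma dotp_comm (a b : Fin n → ℝ) : dotp a b = dotp b a := by simp [dotp, mul_comm]
lemma dotp_smul_right (c : ℝ) (a b : Fin n → ℝ) : dotp a (c • b) = c * dotp a b := by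
  simp [dotp, Finset.mul_sum, mul_comm, mul_left_comm]
lemma dotp_smul_left (c : ℝ) (a b : Fin n → ℝ) : dotp (c • a) b = c * dotp a b := by
  rw [dotp_comm, dotp_smul_right, dotp_comm]
lemma dotp_add_right (a b c : Fin n → ℝ) : dotp a (b + c) = dotp a b + dotp a c := by
  simp [dotp, mul_add, Finset.sum_add_distrib]
lemma dotp_add_left (a b c : Fin n → ℝ) : dotp (a + b) c = dotp a c + dotp b c := by
  rw [dotp_comm, dotp_add_right, dotp_comm a, dotp_comm b]
lemma dotp_neg_right (a b : Fin n → ℝ) : dotp a (-b) = - dotp a b := by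
  simpa using dotp_smul_right (-1) a b
lemma dotp_neg_left (a b : Fin n → ℝ) : dotp (-a) b = - dotp a b := by
  simpa using dotp_smul_left (-1) a b

lemma dotp_self_nonneg (u : Fin n → ℝ) : 0 ≤ dotp u u :=
  Finset.sum_nonneg fun i _ => mul_self_nonneg _

lemma dotp_zero_iff (u : Fin n → ℝ) : dotp u u = 0 ↔ u = 0 := by
  constructor
  · intro h
    funext i
    have h0 : ∀ j ∈ Finset.univ, (0:ℝ) ≤ u j * u j := fun j _ => mul_self_nonneg _
    have := (Finset.sum_eq_zero_iff_of_nonneg h0).mp h i (Finset.mem_univ i)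
    simpa using mul_self_eq_zero.mp this
  · intro h; simp [h, dotp]

end forms

section expand
variable {n : ℕ} (R : MultilinearMap ℝ (fun _ : Fin 4 => (Fin n → ℝ)) ℝ)
  (Rc : MultilinearMap ℂ (fun _ : Fin 4 => (Fin n → ℂ)) ℂ)

lemma expand16
    (hext : ∀ X Y Z W : Fin n → ℝ, Rc ![ιC X, ιC Y, ιC Z, ιC W] = (R ![X, Y, Z, W] : ℂ))
    (A B C D E F G H : Fin n → ℝ) :
    Rc ![ιC A + Complex.I • ιC B, ιC C + Complex.I • ιC D,
         ιC E + Complex.I • ιC F, ιC G + Complex.I • ιC H] =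
      ((R ![A,C,E,G] : ℂ) + (R ![A,C,E,H] : ℂ) * Complex.I + (R ![A,C,F,G] : ℂ) * Complex.I
        - (R ![A,C,F,H] : ℂ)
        + (R ![A,D,E,G] : ℂ) * Complex.I - (R ![A,D,E,H] : ℂ) - (R ![A,D,F,G] : ℂ)
        - (R ![A,D,F,H] : ℂ) * Complex.I
        + (R ![B,C,E,G] : ℂ) * Complex.I - (R ![B,C,E,H] : ℂ) - (R ![B,C,F,G] : ℂ)
        - (R ![B,C,F,H] : ℂ) * Complex.I
        - (R ![B,D,E,G] : ℂ) - (R ![B,D,E,H] : ℂ) * Complex.I - (R ![B,D,F,G] : ℂ) * Complex.I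
        + (R ![B,D,F,H] : ℂ)) := by
  simp only [madd0, madd1, madd2, madd3, msmul0, msmul1, msmul2, msmul3, hext, smul_eq_mul]
  ring_nf
  simp only [show Complex.I ^ 3 = -Complex.I from by rw [pow_succ, Complex.I_sq]; ring,
    Complex.I_sq, Complex.I_pow_four]
  ring

lemma key_eval
    (hanti : ∀ X Y Z W, R ![X, Y, Z, W] = - R ![Y, X, Z, W])
    (hpair : ∀ X Y Z W, R ![X, Y, Z, W] = R ![Z, W, X, Y])
    (hbianchi : ∀ X Y Z W, R ![X, Y, Z, W] + R ![Y, Z, X, W] + R ![Z, X, Y, W] = 0)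
    (hext : ∀ X Y Z W : Fin n → ℝ, Rc ![ιC X, ιC Y, ιC Z, ιC W] = (R ![X, Y, Z, W] : ℂ))
    (e₁ e₂ w x : Fin n → ℝ) :
    Rc ![ιC e₁ + Complex.I • ιC e₂, ιC w + Complex.I • ιC x,
         ιC e₁ + Complex.I • ιC (-e₂), ιC w + Complex.I • ιC (-x)] =
      ((R ![e₁,w,e₁,w] + R ![e₁,x,e₁,x] + R ![e₂,w,e₂,w] + R ![e₂,x,e₂,x]
        - 2 * R ![e₁,e₂,w,x] : ℝ) : ℂ) := by
  rw [expand16 R Rc hext]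
  simp only [mneg2, mneg3]
  have cast : ∀ a b : ℝ, a = b → (a : ℂ) = (b : ℂ) := fun a b h => by rw [h]
  have hp1C := cast _ _ (hpair e₁ w e₁ x)
  have hp2C := cast _ _ (hpair e₁ w e₂ w)
  have hp3C := cast _ _ (hpair e₁ x e₂ x)
  have hp4C := cast _ _ (hpair e₂ w e₂ x)
  have hp5C := cast _ _ (hpair e₂ w e₁ x)
  have hp6C := cast _ _ (hpair e₂ x e₁ w)
  have hbC := cast _ _ (hbianchi e₁ e₂ w x)
  have haC := cast _ _ (hanti w e₁ e₂ x)
  push_cast at hp1C hp2C hp3C hp4C hp5C hp6C hbC haC ⊢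
  linear_combination (-Complex.I) * (hp1C + hp2C + hp3C + hp4C) - hp5C - hp6C + 2*hbC - 2*haC

end expand

section ortho
variable {n : ℕ}

lemma bridge (X Y : Fin n → ℝ) :
    dotp X Y = inner ℝ (WithLp.toLp 2 X : EuclideanSpace ℝ (Fin n)) (WithLp.toLp 2 Y) := by
  rw [PiLp.inner_apply]
  simp [dotp, RCLike.inner_apply, mul_comm]

lemma exists_ortho (hn : 4 ≤ n) (u v w : Fin n → ℝ) :
    ∃ e : Fin n → ℝ, dotp e e = 1 ∧ dotp u e = 0 ∧ dotp v e = 0 ∧ dotp w e = 0 := by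
  set E := EuclideanSpace ℝ (Fin n)
  set S : Submodule ℝ E := Submodule.span ℝ ({WithLp.toLp 2 u, WithLp.toLp 2 v, WithLp.toLp 2 w} : Set E) with hS
  letI := Classical.decEq E
  haveI : FiniteDimensional ℝ S := FiniteDimensional.span_of_finite ℝ
    (Set.Finite.insert _ (Set.Finite.insert _ (Set.finite_singleton _)))
  have hfr : Module.finrank ℝ S ≤ 3 := by
    have h1 := finrank_span_le_card (R := ℝ) ({WithLp.toLp 2 u, WithLp.toLp 2 v, WithLp.toLp 2 w} : Set E)
    have h3 : ({WithLp.toLp 2 u, WithLp.toLp 2 v, WithLp.toLp 2 w} : Set E).toFinset.card ≤ 3 := by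
      rw [Set.toFinset_insert, Set.toFinset_insert, Set.toFinset_singleton]
      exact (Finset.card_insert_le _ _).trans
        (Nat.succ_le_succ ((Finset.card_insert_le _ _).trans (by simp)))
    exact le_trans h1 h3
  have hne : S ≠ ⊤ := by
    intro h
    have h2 := hfr
    rw [h, finrank_top, finrank_euclideanSpace, Fintype.card_fin] at h2
    omega
  have hbot : Sᗮ ≠ ⊥ := by
    simp only [ne_eq, Submodule.orthogonal_eq_bot_iff]
    exact hne
  obtain ⟨x, hxS, hx0⟩ := Submodule.exists_mem_ne_zero_of_ne_bot hbot
  refine ⟨((‖x‖⁻¹ : ℝ) • x).ofLp, ?_, ?_, ?_, ?_⟩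
  · rw [bridge, WithLp.toLp_ofLp, real_inner_smul_left, real_inner_smul_right, real_inner_self_eq_norm_mul_norm]
    have : ‖x‖ ≠ 0 := norm_ne_zero_iff.mpr hx0
    field_simp
  · rw [bridge, WithLp.toLp_ofLp, real_inner_smul_right]
    have := (Submodule.mem_orthogonal S x).mp hxS (WithLp.toLp 2 u) (Submodule.subset_span (by simp))
    rw [this]; ring
  · rw [bridge, WithLp.toLp_ofLp, real_inner_smul_right]
    have := (Submodule.mem_orthogonal S x).mp hxS (WithLp.toLp 2 v) (Submodule.subset_span (by simp))
    rw [this]; ring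
  · rw [bridge, WithLp.toLp_ofLp, real_inner_smul_right]
    have := (Submodule.mem_orthogonal S x).mp hxS (WithLp.toLp 2 w) (Submodule.subset_span (by simp))
    rw [this]; ring

end ortho

end PICAux

namespace PICAux
section realcore
variable {n : ℕ} (R : MultilinearMap ℝ (fun _ : Fin 4 => (Fin n → ℝ)) ℝ)

def Pic1 (R : MultilinearMap ℝ (fun _ : Fin 4 => (Fin n → ℝ)) ℝ) : Prop :=
  ∀ e₁ e₂ e₃ e₄ : Fin n → ℝ, ON4 e₁ e₂ e₃ e₄ →
      ∀ lam : ℝ, lam ∈ Set.Icc (0 : ℝ) 1 →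
      0 ≤ R ![e₁, e₃, e₁, e₃] + lam ^ 2 * R ![e₁, e₄, e₁, e₄]
          + R ![e₂, e₃, e₂, e₃] + lam ^ 2 * R ![e₂, e₄, e₂, e₄]
          - 2 * lam * R ![e₁, e₂, e₃, e₄]

lemma Kpos (hn : 4 ≤ n) (hP : Pic1 R) (e₁ e₂ e₃ : Fin n → ℝ)
    (h11 : dotp e₁ e₁ = 1) (h22 : dotp e₂ e₂ = 1) (h33 : dotp e₃ e₃ = 1)
    (h12 : dotp e₁ e₂ = 0) (h13 : dotp e₁ e₃ = 0) (h23 : dotp e₂ e₃ = 0) :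
    0 ≤ R ![e₁,e₃,e₁,e₃] + R ![e₂,e₃,e₂,e₃] := by
  obtain ⟨e₄, h44, h14, h24, h34⟩ := exists_ortho hn e₁ e₂ e₃
  have := hP e₁ e₂ e₃ e₄ ⟨h11, h22, h33, h44, h12, h13, h14, h23, h24, h34⟩ 0
    ⟨le_refl 0, zero_le_one⟩
  nlinarith [this]

lemma Kpos' (hn : 4 ≤ n) (hP : Pic1 R) (e₁ e₂ x : Fin n → ℝ)
    (h11 : dotp e₁ e₁ = 1) (h22 : dotp e₂ e₂ = 1) (h12 : dotp e₁ e₂ = 0)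
    (hx1 : dotp e₁ x = 0) (hx2 : dotp e₂ x = 0) :
    0 ≤ R ![e₁,x,e₁,x] + R ![e₂,x,e₂,x] := by
  by_cases hx0 : x = 0
  · subst hx0
    have z1 : R ![e₁,(0 : Fin n → ℝ),e₁,0] = 0 := R.map_coord_zero (m := ![e₁,0,e₁,0]) 1 rfl
    have z2 : R ![e₂,(0 : Fin n → ℝ),e₂,0] = 0 := R.map_coord_zero (m := ![e₂,0,e₂,0]) 1 rfl
    rw [z1, z2]; norm_num
  · have hxx : 0 < dotp x x := lt_of_le_of_ne (dotp_self_nonneg x)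
      (fun h => hx0 ((dotp_zero_iff x).mp h.symm))
    set b := Real.sqrt (dotp x x) with hbdef
    have hb : 0 < b := Real.sqrt_pos.mpr hxx
    have hb2 : b * b = dotp x x := Real.mul_self_sqrt (le_of_lt hxx)
    set e : Fin n → ℝ := b⁻¹ • x with he
    have hxE : x = b • e := by
      rw [he, smul_smul, mul_inv_cancel₀ hb.ne', one_smul]
    have hee : dotp e e = 1 := by
      rw [he, dotp_smul_left, dotp_smul_right, ← hb2]; field_simp
    have h1e : dotp e₁ e = 0 := by rw [he, dotp_smul_right, hx1]; ring
    have h2e : dotp e₂ e = 0 := by rw [he, dotp_smul_right, hx2]; ring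
    have key := Kpos R hn hP e₁ e₂ e h11 h22 hee h12 h1e h2e
    rw [hxE]
    simp only [msmul1, msmul3, smul_eq_mul]
    nlinarith [key]

lemma realcoreA (hn : 4 ≤ n) (hP : Pic1 R) (e₁ e₂ w x : Fin n → ℝ)
    (hanti : ∀ X Y Z W, R ![X, Y, Z, W] = - R ![Y, X, Z, W])
    (hpair : ∀ X Y Z W, R ![X, Y, Z, W] = R ![Z, W, X, Y])
    (h11 : dotp e₁ e₁ = 1) (h22 : dotp e₂ e₂ = 1) (h12 : dotp e₁ e₂ = 0)
    (hw1 : dotp e₁ w = 0) (hw2 : dotp e₂ w = 0)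
    (hx1 : dotp e₁ x = 0) (hx2 : dotp e₂ x = 0) (hwx : dotp w x = 0) :
    0 ≤ R ![e₁,w,e₁,w] + R ![e₁,x,e₁,x] + R ![e₂,w,e₂,w] + R ![e₂,x,e₂,x]
        - 2 * R ![e₁,e₂,w,x] := by
  by_cases hw0 : w = 0
  · subst hw0
    have z1 : R ![e₁,(0 : Fin n → ℝ),e₁,0] = 0 := R.map_coord_zero (m := ![e₁,0,e₁,0]) 1 rfl
    have z2 : R ![e₂,(0 : Fin n → ℝ),e₂,0] = 0 := R.map_coord_zero (m := ![e₂,0,e₂,0]) 1 rfl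
    have z3 : R ![e₁,e₂,(0 : Fin n → ℝ),x] = 0 := R.map_coord_zero (m := ![e₁,e₂,0,x]) 2 rfl
    rw [z1, z2, z3]
    by_cases hx0 : x = 0
    · subst hx0
      have z4 : R ![e₁,(0 : Fin n → ℝ),e₁,0] = 0 := R.map_coord_zero (m := ![e₁,0,e₁,0]) 1 rfl
      have z5 : R ![e₂,(0 : Fin n → ℝ),e₂,0] = 0 := R.map_coord_zero (m := ![e₂,0,e₂,0]) 1 rfl
      rw [z4, z5]; norm_num
    · have := Kpos' R hn hP e₁ e₂ x h11 h22 h12 hx1 hx2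
      linarith
  · by_cases hx0 : x = 0
    · subst hx0
      have z1 : R ![e₁,(0 : Fin n → ℝ),e₁,0] = 0 := R.map_coord_zero (m := ![e₁,0,e₁,0]) 1 rfl
      have z2 : R ![e₂,(0 : Fin n → ℝ),e₂,0] = 0 := R.map_coord_zero (m := ![e₂,0,e₂,0]) 1 rfl
      have z3 : R ![e₁,e₂,w,0] = 0 := R.map_coord_zero (m := ![e₁,e₂,w,0]) 3 rfl
      rw [z1, z2, z3]
      have := Kpos' R hn hP e₁ e₂ w h11 h22 h12 hw1 hw2
      linarith
    · have hww : 0 < dotp w w := lt_of_le_of_ne (dotp_self_nonneg w)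
        (fun h => hw0 ((dotp_zero_iff w).mp h.symm))
      have hxx : 0 < dotp x x := lt_of_le_of_ne (dotp_self_nonneg x)
        (fun h => hx0 ((dotp_zero_iff x).mp h.symm))
      set a := Real.sqrt (dotp w w) with hadef
      set b := Real.sqrt (dotp x x) with hbdef
      have ha : 0 < a := Real.sqrt_pos.mpr hww
      have hb : 0 < b := Real.sqrt_pos.mpr hxx
      have ha2 : a * a = dotp w w := Real.mul_self_sqrt (le_of_lt hww)
      have hb2 : b * b = dotp x x := Real.mul_self_sqrt (le_of_lt hxx)
      set e₃ : Fin n → ℝ := a⁻¹ • w with he3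
      set e₄ : Fin n → ℝ := b⁻¹ • x with he4
      have hwE : w = a • e₃ := by
        rw [he3, smul_smul, mul_inv_cancel₀ ha.ne', one_smul]
      have hxE : x = b • e₄ := by
        rw [he4, smul_smul, mul_inv_cancel₀ hb.ne', one_smul]
      have h33 : dotp e₃ e₃ = 1 := by
        rw [he3, dotp_smul_left, dotp_smul_right, ← ha2]; field_simp
      have h44 : dotp e₄ e₄ = 1 := by
        rw [he4, dotp_smul_left, dotp_smul_right, ← hb2]; field_simp
      have h13 : dotp e₁ e₃ = 0 := by rw [he3, dotp_smul_right, hw1]; ring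
      have h23 : dotp e₂ e₃ = 0 := by rw [he3, dotp_smul_right, hw2]; ring
      have h14 : dotp e₁ e₄ = 0 := by rw [he4, dotp_smul_right, hx1]; ring
      have h24 : dotp e₂ e₄ = 0 := by rw [he4, dotp_smul_right, hx2]; ring
      have h34 : dotp e₃ e₄ = 0 := by
        rw [he3, he4, dotp_smul_left, dotp_smul_right, hwx]; ring
      rw [hwE, hxE]
      simp only [msmul1, msmul2, msmul3, smul_eq_mul]
      rcases le_or_gt b a with hba | hab
      · have hl0 : 0 ≤ b / a := by positivity
        have hl1 : b / a ≤ 1 := by rw [div_le_one ha]; exact hba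
        have key := hP e₁ e₂ e₃ e₄ ⟨h11, h22, h33, h44, h12, h13, h14, h23, h24, h34⟩
          (b / a) ⟨hl0, hl1⟩
        have h2 : (0:ℝ) ≤ (a*a) * R ![e₁,e₃,e₁,e₃] + (b*b) * R ![e₁,e₄,e₁,e₄]
            + (a*a) * R ![e₂,e₃,e₂,e₃] + (b*b) * R ![e₂,e₄,e₂,e₄]
            - 2 * (a*b) * R ![e₁,e₂,e₃,e₄] := by
          calc (0:ℝ) ≤ (a * a) * (R ![e₁,e₃,e₁,e₃] + (b/a)^2 * R ![e₁,e₄,e₁,e₄]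
              + R ![e₂,e₃,e₂,e₃] + (b/a)^2 * R ![e₂,e₄,e₂,e₄]
              - 2 * (b/a) * R ![e₁,e₂,e₃,e₄]) := mul_nonneg (by positivity) key
            _ = _ := by field_simp
        ring_nf at h2 ⊢
        linarith [h2]
      · have hl0 : 0 ≤ a / b := by positivity
        have hl1 : a / b ≤ 1 := by rw [div_le_one hb]; exact le_of_lt hab
        have h33' : dotp (-e₃) (-e₃) = 1 := by rw [dotp_neg_left, dotp_neg_right, h33]; ring
        have h13' : dotp e₁ (-e₃) = 0 := by rw [dotp_neg_right, h13]; ring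
        have h23' : dotp e₂ (-e₃) = 0 := by rw [dotp_neg_right, h23]; ring
        have h43' : dotp e₄ (-e₃) = 0 := by
          rw [dotp_neg_right, dotp_comm, h34]; ring
        have key := hP e₁ e₂ e₄ (-e₃) ⟨h11, h22, h44, h33', h12, h14, h13', h24, h23', h43'⟩
          (a / b) ⟨hl0, hl1⟩
        simp only [mneg1, mneg3, neg_neg] at key
        rw [anti23R R hanti hpair e₁ e₂ e₄ e₃] at key
        have key2 : 0 ≤ R ![e₁,e₄,e₁,e₄] + (a/b)^2 * R ![e₁,e₃,e₁,e₃]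
            + R ![e₂,e₄,e₂,e₄] + (a/b)^2 * R ![e₂,e₃,e₂,e₃]
            - 2 * (a/b) * R ![e₁,e₂,e₃,e₄] := by linarith [key]
        have h2 : (0:ℝ) ≤ (b*b) * R ![e₁,e₄,e₁,e₄] + (a*a) * R ![e₁,e₃,e₁,e₃]
            + (b*b) * R ![e₂,e₄,e₂,e₄] + (a*a) * R ![e₂,e₃,e₂,e₃]
            - 2 * (a*b) * R ![e₁,e₂,e₃,e₄] := by
          calc (0:ℝ) ≤ (b * b) * (R ![e₁,e₄,e₁,e₄] + (a/b)^2 * R ![e₁,e₃,e₁,e₃]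
              + R ![e₂,e₄,e₂,e₄] + (a/b)^2 * R ![e₂,e₃,e₂,e₃]
              - 2 * (a/b) * R ![e₁,e₂,e₃,e₄]) := mul_nonneg (by positivity) key2
            _ = _ := by field_simp
        ring_nf at h2 ⊢
        linarith [h2]

lemma exists_rot (A B : ℝ) : ∃ c s : ℝ, c^2 + s^2 = 1 ∧ A*(c^2 - s^2) + B*(c*s) = 0 := by
  by_cases hA : A = 0
  · exact ⟨1, 0, by norm_num, by simp [hA]⟩
  · set D := Real.sqrt (B^2 + 4*A^2) with hD
    have hD2 : D^2 = B^2 + 4*A^2 := Real.sq_sqrt (by positivity)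
    set t := (B + D) / (2*A) with ht
    have hqt : A*t^2 - B*t - A = 0 := by
      rw [ht]
      field_simp
      ring_nf
      nlinarith [hD2]
    set c := 1 / Real.sqrt (1 + t^2) with hc
    have hpos : (0:ℝ) < 1 + t^2 := by positivity
    have hsq : Real.sqrt (1 + t^2) ^ 2 = 1 + t^2 := Real.sq_sqrt (le_of_lt hpos)
    have hsne : Real.sqrt (1 + t^2) ≠ 0 := by positivity
    have hc2 : c^2 = 1 / (1 + t^2) := by rw [hc, div_pow, hsq]; norm_num
    refine ⟨c, t * c, ?_, ?_⟩
    · rw [mul_pow, hc2]; field_simp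
    · have : A*(c^2 - (t*c)^2) + B*(c*(t*c)) = c^2 * (A*(1 - t^2) + B*t) := by ring
      rw [this]
      have : A*(1 - t^2) + B*t = -(A*t^2 - B*t - A) := by ring
      rw [this, hqt]
      ring

lemma realcore (hn : 4 ≤ n) (hP : Pic1 R)
    (hanti : ∀ X Y Z W, R ![X, Y, Z, W] = - R ![Y, X, Z, W])
    (hpair : ∀ X Y Z W, R ![X, Y, Z, W] = R ![Z, W, X, Y])
    (e₁ e₂ w x : Fin n → ℝ)
    (h11 : dotp e₁ e₁ = 1) (h22 : dotp e₂ e₂ = 1) (h12 : dotp e₁ e₂ = 0)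
    (hw1 : dotp e₁ w = 0) (hw2 : dotp e₂ w = 0)
    (hx1 : dotp e₁ x = 0) (hx2 : dotp e₂ x = 0) :
    0 ≤ R ![e₁,w,e₁,w] + R ![e₁,x,e₁,x] + R ![e₂,w,e₂,w] + R ![e₂,x,e₂,x]
        - 2 * R ![e₁,e₂,w,x] := by
  obtain ⟨c, s, hcs, hrot⟩ := exists_rot (dotp w x) (dotp x x - dotp w w)
  set w₁ : Fin n → ℝ := c • w + s • x with hw₁
  set x₁ : Fin n → ℝ := (-s) • w + c • x with hx₁
  have hwx1 : dotp w₁ x₁ = 0 := by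
    rw [hw₁, hx₁]
    simp only [dotp_add_left, dotp_add_right, dotp_smul_left, dotp_smul_right]
    rw [dotp_comm x w]
    nlinarith [hrot]
  have hw1' : dotp e₁ w₁ = 0 := by
    rw [hw₁, dotp_add_right, dotp_smul_right, dotp_smul_right, hw1, hx1]; ring
  have hw2' : dotp e₂ w₁ = 0 := by
    rw [hw₁, dotp_add_right, dotp_smul_right, dotp_smul_right, hw2, hx2]; ring
  have hx1' : dotp e₁ x₁ = 0 := by
    rw [hx₁, dotp_add_right, dotp_smul_right, dotp_smul_right, hw1, hx1]; ring
  have hx2' : dotp e₂ x₁ = 0 := by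
    rw [hx₁, dotp_add_right, dotp_smul_right, dotp_smul_right, hw2, hx2]; ring
  have hwE : w = c • w₁ + (-s) • x₁ := by
    funext i
    simp only [hw₁, hx₁, Pi.add_apply, Pi.smul_apply, smul_eq_mul]
    linear_combination (-(w i)) * hcs
  have hxE : x = s • w₁ + c • x₁ := by
    funext i
    simp only [hw₁, hx₁, Pi.add_apply, Pi.smul_apply, smul_eq_mul]
    linear_combination (-(x i)) * hcs
  have key := realcoreA R hn hP e₁ e₂ w₁ x₁ hanti hpair h11 h22 h12 hw1' hw2' hx1' hx2' hwx1
  have hz1 : R ![e₁,e₂,w₁,w₁] = 0 := by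
    have := anti23R R hanti hpair e₁ e₂ w₁ w₁; linarith
  have hz2 : R ![e₁,e₂,x₁,x₁] = 0 := by
    have := anti23R R hanti hpair e₁ e₂ x₁ x₁; linarith
  have hz3 : R ![e₁,e₂,x₁,w₁] = - R ![e₁,e₂,w₁,x₁] := by
    have h1 := anti23R R hanti hpair e₁ e₂ x₁ w₁
    linarith [h1]
  have hEq : R ![e₁,w,e₁,w] + R ![e₁,x,e₁,x] + R ![e₂,w,e₂,w] + R ![e₂,x,e₂,x]
      - 2 * R ![e₁,e₂,w,x]
      = R ![e₁,w₁,e₁,w₁] + R ![e₁,x₁,e₁,x₁] + R ![e₂,w₁,e₂,w₁] + R ![e₂,x₁,e₂,x₁]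
      - 2 * R ![e₁,e₂,w₁,x₁] := by
    rw [hwE, hxE]
    simp only [madd1, madd2, madd3, msmul1, msmul2, msmul3, smul_eq_mul]
    linear_combination (R ![e₁,w₁,e₁,w₁] + R ![e₁,x₁,e₁,x₁] + R ![e₂,w₁,e₂,w₁]
      + R ![e₂,x₁,e₂,x₁] - 2 * R ![e₁,e₂,w₁,x₁]) * hcs
      + (-2*c*s)*hz1 + (2*c*s)*hz2 - 2*(-s)*s*hz3 - 2*c*c*(0*hz3)
  linarith [key, hEq]

end realcore

section creduce
variable {n : ℕ} (R : MultilinearMap ℝ (fun _ : Fin 4 => (Fin n → ℝ)) ℝ)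
  (Rc : MultilinearMap ℂ (fun _ : Fin 4 => (Fin n → ℂ)) ℂ)

lemma zero01 (hanti : ∀ X Y Z W, R ![X, Y, Z, W] = - R ![Y, X, Z, W])
    (hext : ∀ X Y Z W : Fin n → ℝ, Rc ![ιC X, ιC Y, ιC Z, ιC W] = (R ![X, Y, Z, W] : ℂ))
    (a c d : Fin n → ℂ) : Rc ![a,a,c,d] = 0 := by
  have h := cAnti01 R Rc hanti hext a a c d
  linear_combination h / 2

lemma zero23 (hanti : ∀ X Y Z W, R ![X, Y, Z, W] = - R ![Y, X, Z, W])
    (hpair : ∀ X Y Z W, R ![X, Y, Z, W] = R ![Z, W, X, Y])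
    (hext : ∀ X Y Z W : Fin n → ℝ, Rc ![ιC X, ιC Y, ιC Z, ιC W] = (R ![X, Y, Z, W] : ℂ))
    (a b c : Fin n → ℂ) : Rc ![a,b,c,c] = 0 := by
  have h := cAnti23 R Rc hanti hpair hext a b c c
  linear_combination h / 2

lemma shift1 (hanti : ∀ X Y Z W, R ![X, Y, Z, W] = - R ![Y, X, Z, W])
    (hpair : ∀ X Y Z W, R ![X, Y, Z, W] = R ![Z, W, X, Y])
    (hext : ∀ X Y Z W : Fin n → ℝ, Rc ![ιC X, ιC Y, ιC Z, ιC W] = (R ![X, Y, Z, W] : ℂ))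
    (ζ η : Fin n → ℂ) (μ : ℂ) :
    Rc ![ζ, η + μ • ζ, conjv ζ, conjv (η + μ • ζ)] = Rc ![ζ, η, conjv ζ, conjv η] := by
  rw [conjv_add, conjv_smul]
  rw [madd1, madd3, madd3, msmul1, msmul3, msmul3]
  rw [zero01 R Rc hanti hext, zero23 R Rc hanti hpair hext,
    zero23 R Rc hanti hpair hext]
  simp

lemma swap_pairs (hanti : ∀ X Y Z W, R ![X, Y, Z, W] = - R ![Y, X, Z, W])
    (hpair : ∀ X Y Z W, R ![X, Y, Z, W] = R ![Z, W, X, Y])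
    (hext : ∀ X Y Z W : Fin n → ℝ, Rc ![ιC X, ιC Y, ιC Z, ιC W] = (R ![X, Y, Z, W] : ℂ))
    (a b c d : Fin n → ℂ) : Rc ![b,a,d,c] = Rc ![a,b,c,d] := by
  rw [cAnti01 R Rc hanti hext, cAnti23 R Rc hanti hpair hext]
  ring

lemma gc_smul_left (c : ℂ) (a b : Fin n → ℂ) : gc (c • a) b = c * gc a b := by
  rw [gc_comm, gc_smul_right, gc_comm]

lemma gc_add_left (a b c : Fin n → ℂ) : gc (a + b) c = gc a c + gc b c := by
  rw [gc_comm, gc_add_right, gc_comm a, gc_comm b]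

/-- The key half-isotropic case: ζ isotropic and orthogonal to η. -/
lemma key_case (hn : 4 ≤ n) (hP : Pic1 R)
    (hanti : ∀ X Y Z W, R ![X, Y, Z, W] = - R ![Y, X, Z, W])
    (hpair : ∀ X Y Z W, R ![X, Y, Z, W] = R ![Z, W, X, Y])
    (hbianchi : ∀ X Y Z W, R ![X, Y, Z, W] + R ![Y, Z, X, W] + R ![Z, X, Y, W] = 0)
    (hext : ∀ X Y Z W : Fin n → ℝ, Rc ![ιC X, ιC Y, ιC Z, ιC W] = (R ![X, Y, Z, W] : ℂ))
    (ζ η : Fin n → ℂ) (hzz : gc ζ ζ = 0) (hzh : gc ζ η = 0) :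
    0 ≤ Rc ![ζ, η, conjv ζ, conjv η] := by
  set u := reV ζ with hu
  set v := imV ζ with hv
  have hzdec : ζ = ιC u + Complex.I • ιC v := vec_decomp ζ
  have hgz := hzz
  rw [hzdec, gc_decomp] at hgz
  rw [Complex.ext_iff] at hgz
  simp only [Complex.add_re, Complex.add_im, Complex.ofReal_re, Complex.ofReal_im,
    Complex.mul_re, Complex.mul_im, Complex.I_re, Complex.I_im, Complex.zero_re,
    Complex.zero_im] at hgz
  obtain ⟨hre, him⟩ := hgz
  have huv : dotp u u = dotp v v := by nlinarith [hre]
  have huv2 : dotp u v = 0 := by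
    have := him
    rw [dotp_comm v u] at this
    nlinarith [this]
  by_cases hu0 : u = 0
  · have hv0 : v = 0 := by
      rw [← dotp_zero_iff]
      rw [← huv, hu0, dotp_zero_iff]
    have hz0 : ζ = 0 := by
      rw [hzdec, hu0, hv0]
      funext i; simp [ιC]
    rw [hz0]
    have : Rc ![(0 : Fin n → ℂ), η, conjv 0, conjv η] = 0 :=
      Rc.map_coord_zero (m := ![0, η, conjv 0, conjv η]) 0 rfl
    rw [this]
  · have huu : 0 < dotp u u := lt_of_le_of_ne (dotp_self_nonneg u)
      (fun h => hu0 ((dotp_zero_iff u).mp h.symm))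
    set r := Real.sqrt (dotp u u) with hrdef
    have hr : 0 < r := Real.sqrt_pos.mpr huu
    have hr2 : r * r = dotp u u := Real.mul_self_sqrt (le_of_lt huu)
    set e₁ : Fin n → ℝ := r⁻¹ • u with he1
    set e₂ : Fin n → ℝ := r⁻¹ • v with he2
    have h11 : dotp e₁ e₁ = 1 := by
      rw [he1, dotp_smul_left, dotp_smul_right, ← hr2]; field_simp
    have h22 : dotp e₂ e₂ = 1 := by
      rw [he2, dotp_smul_left, dotp_smul_right, ← huv, ← hr2]; field_simp
    have h12 : dotp e₁ e₂ = 0 := by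
      rw [he1, he2, dotp_smul_left, dotp_smul_right, huv2]; ring
    set ζ₀ : Fin n → ℂ := ιC e₁ + Complex.I • ιC e₂ with hz0def
    have hζr : ζ = (r : ℂ) • ζ₀ := by
      rw [hzdec, hz0def]
      funext i
      have hui : u i = r * e₁ i := by
        rw [he1]; simp only [Pi.smul_apply, smul_eq_mul]; field_simp
      have hvi : v i = r * e₂ i := by
        rw [he2]; simp only [Pi.smul_apply, smul_eq_mul]; field_simp
      simp only [Pi.add_apply, Pi.smul_apply, ιC, smul_eq_mul, hui, hvi]
      push_cast
      ring
    have hgz0η : gc ζ₀ η = 0 := by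
      have : gc ζ η = (r:ℂ) * gc ζ₀ η := by rw [hζr, gc_smul_left]
      rw [hzh] at this
      have hrne : (r:ℂ) ≠ 0 := by
        simp only [ne_eq, Complex.ofReal_eq_zero]; exact hr.ne'
      field_simp at this
      exact (mul_eq_zero.mp this.symm).resolve_left hrne
    clear_value e₁ e₂
    -- decompose η
    set w' := reV η with hw'
    set x' := imV η with hx'
    have hηdec : η = ιC w' + Complex.I • ιC x' := vec_decomp η
    have hgzη := hgz0η
    rw [hz0def, hηdec, gc_decomp, Complex.ext_iff] at hgzη
    simp only [Complex.add_re, Complex.add_im, Complex.ofReal_re, Complex.ofReal_im,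
      Complex.mul_re, Complex.mul_im, Complex.I_re, Complex.I_im, Complex.zero_re,
      Complex.zero_im] at hgzη
    obtain ⟨hore, hoim⟩ := hgzη
    have ho1 : dotp e₁ w' = dotp e₂ x' := by nlinarith [hore]
    have ho2 : dotp e₁ x' + dotp e₂ w' = 0 := by nlinarith [hoim]
    set aR := dotp e₁ w' with haR
    set bR := -(dotp e₂ w') with hbR
    set α : ℂ := (aR : ℂ) + (bR : ℂ) * Complex.I with hα
    set w : Fin n → ℝ := w' + (-aR) • e₁ + bR • e₂ with hwdef
    set x : Fin n → ℝ := x' + (-bR) • e₁ + (-aR) • e₂ with hxdef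
    have hshift : η + (-α) • ζ₀ = ιC w + Complex.I • ιC x := by
      rw [hηdec, hz0def, hwdef, hxdef, hα]
      funext i
      simp only [Pi.add_apply, Pi.smul_apply, ιC, smul_eq_mul]
      rw [Complex.ext_iff]
      constructor <;>
        (simp only [Complex.add_re, Complex.add_im, Complex.mul_re, Complex.mul_im,
          Complex.neg_re, Complex.neg_im, Complex.ofReal_re, Complex.ofReal_im,
          Complex.I_re, Complex.I_im]; ring)
    -- orthogonality of w, x to e₁, e₂
    have hw1 : dotp e₁ w = 0 := by
      rw [hwdef, dotp_add_right, dotp_add_right, dotp_smul_right, dotp_smul_right,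
        h11, h12, haR]
      ring
    have hw2 : dotp e₂ w = 0 := by
      rw [hwdef, dotp_add_right, dotp_add_right, dotp_smul_right, dotp_smul_right,
        dotp_comm e₂ e₁, h12, h22, hbR]
      ring
    have hx1 : dotp e₁ x = 0 := by
      rw [hxdef, dotp_add_right, dotp_add_right, dotp_smul_right, dotp_smul_right,
        h11, h12, hbR]
      linarith [ho2]
    have hx2 : dotp e₂ x = 0 := by
      rw [hxdef, dotp_add_right, dotp_add_right, dotp_smul_right, dotp_smul_right,
        dotp_comm e₂ e₁, h12, h22, haR]
      linarith [ho1]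
    -- assemble
    have hstep1 : Rc ![ζ, η, conjv ζ, conjv η]
        = ((r:ℂ) * (r:ℂ)) * Rc ![ζ₀, η, conjv ζ₀, conjv η] := by
      rw [hζr, conjv_smul]
      have : starRingEnd ℂ (r:ℂ) = (r:ℂ) := Complex.conj_ofReal r
      rw [this, msmul0, msmul2, smul_eq_mul, smul_eq_mul]
      ring
    have hstep2 : Rc ![ζ₀, η, conjv ζ₀, conjv η]
        = Rc ![ζ₀, η + (-α) • ζ₀, conjv ζ₀, conjv (η + (-α) • ζ₀)] :=
      (shift1 R Rc hanti hpair hext ζ₀ η (-α)).symm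
    have hstep3 : Rc ![ζ₀, η + (-α) • ζ₀, conjv ζ₀, conjv (η + (-α) • ζ₀)]
        = ((R ![e₁,w,e₁,w] + R ![e₁,x,e₁,x] + R ![e₂,w,e₂,w] + R ![e₂,x,e₂,x]
            - 2 * R ![e₁,e₂,w,x] : ℝ) : ℂ) := by
      rw [hshift, hz0def, conjv_form, conjv_form]
      exact key_eval R Rc hanti hpair hbianchi hext e₁ e₂ w x
    have hE := realcore R hn hP hanti hpair e₁ e₂ w x h11 h22 h12 hw1 hw2 hx1 hx2
    rw [hstep1, hstep2, hstep3]
    have : ((r:ℂ) * (r:ℂ)) * ((R ![e₁,w,e₁,w] + R ![e₁,x,e₁,x] + R ![e₂,w,e₂,w]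
        + R ![e₂,x,e₂,x] - 2 * R ![e₁,e₂,w,x] : ℝ) : ℂ)
        = (((r * r) * (R ![e₁,w,e₁,w] + R ![e₁,x,e₁,x] + R ![e₂,w,e₂,w] + R ![e₂,x,e₂,x]
        - 2 * R ![e₁,e₂,w,x]) : ℝ) : ℂ) := by
      push_cast; ring
    rw [this, Complex.zero_le_real]
    positivity

lemma main2 (hn : 4 ≤ n) (hP : Pic1 R)
    (hanti : ∀ X Y Z W, R ![X, Y, Z, W] = - R ![Y, X, Z, W])
    (hpair : ∀ X Y Z W, R ![X, Y, Z, W] = R ![Z, W, X, Y])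
    (hbianchi : ∀ X Y Z W, R ![X, Y, Z, W] + R ![Y, Z, X, W] + R ![Z, X, Y, W] = 0)
    (hext : ∀ X Y Z W : Fin n → ℝ, Rc ![ιC X, ιC Y, ιC Z, ιC W] = (R ![X, Y, Z, W] : ℂ))
    (ζ η : Fin n → ℂ) (hgc : gc ζ ζ * gc η η - (gc ζ η) ^ 2 = 0) :
    0 ≤ Rc ![ζ, η, conjv ζ, conjv η] := by
  by_cases hzz : gc ζ ζ = 0
  · have h2 : gc ζ η = 0 := by
      have hsq : gc ζ η ^ 2 = 0 := by rw [hzz] at hgc; linear_combination -hgc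
      exact (pow_eq_zero_iff two_ne_zero).mp hsq
    exact key_case R Rc hn hP hanti hpair hbianchi hext ζ η hzz h2
  · set μ : ℂ := -(gc ζ η) / gc ζ ζ with hμ
    have h1' : gc ζ η + μ * gc ζ ζ = 0 := by rw [hμ]; field_simp; ring
    have h1 : gc ζ (η + μ • ζ) = 0 := by
      rw [gc_add_right, gc_smul_right]
      linear_combination h1'
    have hexp : gc (η + μ • ζ) (η + μ • ζ)
        = gc η η + 2*μ*(gc ζ η) + μ^2 * gc ζ ζ := by
      rw [gc_add_left, gc_add_right, gc_add_right, gc_smul_left, gc_smul_right,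
        gc_smul_left, gc_smul_right, gc_comm η ζ]
      ring
    have hzz' : gc ζ ζ * gc (η + μ • ζ) (η + μ • ζ) = 0 := by
      rw [hexp]
      linear_combination hgc + (gc ζ η + μ * gc ζ ζ) * h1'
    have h2 : gc (η + μ • ζ) (η + μ • ζ) = 0 := by
      rcases mul_eq_zero.mp hzz' with h | h
      · exact absurd h hzz
      · exact h
    have h3 : gc (η + μ • ζ) ζ = 0 := by rw [gc_comm]; exact h1
    have step1 : Rc ![ζ, η, conjv ζ, conjv η]
        = Rc ![ζ, η + μ • ζ, conjv ζ, conjv (η + μ • ζ)] :=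
      (shift1 R Rc hanti hpair hext ζ η μ).symm
    have step2 : Rc ![ζ, η + μ • ζ, conjv ζ, conjv (η + μ • ζ)]
        = Rc ![η + μ • ζ, ζ, conjv (η + μ • ζ), conjv ζ] :=
      swap_pairs R Rc hanti hpair hext (η + μ • ζ) ζ (conjv (η + μ • ζ)) (conjv ζ)
    rw [step1, step2]
    exact key_case R Rc hn hP hanti hpair hbianchi hext (η + μ • ζ) ζ h2 h3

lemma dir2
    (hanti : ∀ X Y Z W, R ![X, Y, Z, W] = - R ![Y, X, Z, W])
    (hpair : ∀ X Y Z W, R ![X, Y, Z, W] = R ![Z, W, X, Y])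
    (hbianchi : ∀ X Y Z W, R ![X, Y, Z, W] + R ![Y, Z, X, W] + R ![Z, X, Y, W] = 0)
    (hext : ∀ X Y Z W : Fin n → ℝ, Rc ![ιC X, ιC Y, ιC Z, ιC W] = (R ![X, Y, Z, W] : ℂ))
    (hC : ∀ ζ η : Fin n → ℂ, gc ζ ζ * gc η η - (gc ζ η) ^ 2 = 0 →
      0 ≤ Rc ![ζ, η, conjv ζ, conjv η])
    (e₁ e₂ e₃ e₄ : Fin n → ℝ) (hON : ON4 e₁ e₂ e₃ e₄)
    (lam : ℝ) (hlam : lam ∈ Set.Icc (0:ℝ) 1) :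
    0 ≤ R ![e₁, e₃, e₁, e₃] + lam ^ 2 * R ![e₁, e₄, e₁, e₄]
        + R ![e₂, e₃, e₂, e₃] + lam ^ 2 * R ![e₂, e₄, e₂, e₄]
        - 2 * lam * R ![e₁, e₂, e₃, e₄] := by
  obtain ⟨h11, h22, h33, h44, h12, h13, h14, h23, h24, h34⟩ := hON
  set ζ : Fin n → ℂ := ιC e₁ + Complex.I • ιC e₂ with hζ
  set η : Fin n → ℂ := ιC e₃ + Complex.I • ιC (lam • e₄) with hη
  have hgz : gc ζ ζ = 0 := by
    rw [hζ, gc_decomp, h11, h22, h12, dotp_comm e₂ e₁, h12]; norm_num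
  have hgzh : gc ζ η = 0 := by
    rw [hζ, hη, gc_decomp, h13, h23, dotp_smul_right, dotp_smul_right, h14, h24]; norm_num
  have h0 := hC ζ η (by rw [hgz, hgzh]; ring)
  rw [hζ, hη, conjv_form, conjv_form, key_eval R Rc hanti hpair hbianchi hext] at h0
  simp only [msmul1, msmul3, smul_eq_mul] at h0
  rw [Complex.zero_le_real] at h0
  nlinarith [h0]

end creduce
end PICAux

theorem pic1_iff_halfisotropic {n : ℕ} (hn : 4 ≤ n)
    (R : MultilinearMap ℝ (fun _ : Fin 4 => (Fin n → ℝ)) ℝ)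
    (hanti : ∀ X Y Z W, R ![X, Y, Z, W] = - R ![Y, X, Z, W])
    (hpair : ∀ X Y Z W, R ![X, Y, Z, W] = R ![Z, W, X, Y])
    (hbianchi : ∀ X Y Z W,
      R ![X, Y, Z, W] + R ![Y, Z, X, W] + R ![Z, X, Y, W] = 0)
    (Rc : MultilinearMap ℂ (fun _ : Fin 4 => (Fin n → ℂ)) ℂ)
    (hext : ∀ X Y Z W : Fin n → ℝ,
      Rc ![ιC X, ιC Y, ιC Z, ιC W] = (R ![X, Y, Z, W] : ℂ)) :
    (∀ e₁ e₂ e₃ e₄ : Fin n → ℝ, ON4 e₁ e₂ e₃ e₄ →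
      ∀ lam : ℝ, lam ∈ Set.Icc (0 : ℝ) 1 →
      0 ≤ R ![e₁, e₃, e₁, e₃] + lam ^ 2 * R ![e₁, e₄, e₁, e₄]
          + R ![e₂, e₃, e₂, e₃] + lam ^ 2 * R ![e₂, e₄, e₂, e₄]
          - 2 * lam * R ![e₁, e₂, e₃, e₄]) ↔
    (∀ ζ η : Fin n → ℂ, gc ζ ζ * gc η η - (gc ζ η) ^ 2 = 0 →
      0 ≤ Rc ![ζ, η, conjv ζ, conjv η]) := by
  constructor
  · intro hP ζ η hgc
    exact PICAux.main2 R Rc hn hP hanti hpair hbianchi hext ζ η hgc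
  · intro hC e₁ e₂ e₃ e₄ hON lam hlam
    exact PICAux.dir2 R Rc hanti hpair hbianchi hext hC e₁ e₂ e₃ e₄ hON lam hlam
end
end
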